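/- Let R be a commutative ring with unit, let S be an additive submonoid of ℤⁿ = (Fin n → ℤ), let v ∈ S, and let S' = {s + m • v | s ∈ S, m ∈ ℤ} (an additive submonoid of ℤⁿ containing S). Equip the commutative ring AddMonoidAlgebra R S' with the algebra structure over AddMonoidAlgebra R S induced by mapping along the inclusion S ≤ S' (Finsupp.mapDomain of the inclusion). Then AddMonoidAlgebra R S' is the localization of AddMonoidAlgebra R S away from the single element x = Finsupp.single v (1 : R), i.e. IsLocalization.Away x (AddMonoidAlgebra R S') holds. -/

import Mathlib

open AddMonoidAlgebra

theorem aux2 {n : ℕ} (R : Type*) [CommRing R]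
    (S S' : AddSubmonoid (Fin n → ℤ)) (v : Fin n → ℤ) (hv : v ∈ S)
    (hS' : (S' : Set (Fin n → ℤ)) = {x | ∃ s ∈ S, ∃ m : ℤ, x = s + m • v})
    (hle : S ≤ S') :
    @IsLocalization.Away (AddMonoidAlgebra R S) _
      (AddMonoidAlgebra.single (⟨v, hv⟩ : S) (1 : R))
      (AddMonoidAlgebra R S') _
      ((AddMonoidAlgebra.mapDomainRingHom R (AddSubmonoid.inclusion hle)).toAlgebra) := by
  classical
  letI : Algebra (AddMonoidAlgebra R S) (AddMonoidAlgebra R S') :=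
    (AddMonoidAlgebra.mapDomainRingHom R (AddSubmonoid.inclusion hle)).toAlgebra
  set x : AddMonoidAlgebra R S := AddMonoidAlgebra.single (⟨v, hv⟩ : S) 1 with hxdef
  have halg : ∀ a : AddMonoidAlgebra R S,
      algebraMap (AddMonoidAlgebra R S) (AddMonoidAlgebra R S') a
        = AddMonoidAlgebra.mapDomain (AddSubmonoid.inclusion hle) a := fun a => rfl
  have hxpow : ∀ k : ℕ, x ^ k
      = AddMonoidAlgebra.single (⟨k • v, S.nsmul_mem hv k⟩ : S) (1 : R) := by
    intro k
    rw [hxdef, AddMonoidAlgebra.single_pow, one_pow]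
    congr 1
  constructor
  constructor
  · -- map_units
    rintro ⟨y, k, rfl⟩
    show IsUnit (algebraMap (AddMonoidAlgebra R S) (AddMonoidAlgebra R S') (x ^ k))
    rw [hxpow, halg, AddMonoidAlgebra.mapDomain_single]
    have hneg : (-(k • v) : Fin n → ℤ) ∈ (S' : Set _) := by
      rw [hS']
      exact ⟨0, S.zero_mem, -(k : ℤ), by rw [zero_add, neg_zsmul, natCast_zsmul]⟩
    refine IsUnit.of_mul_eq_one
      (AddMonoidAlgebra.single (⟨-(k • v), hneg⟩ : S') (1 : R)) ?_
    rw [AddMonoidAlgebra.single_mul_single, one_mul]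
    have h0 : (AddSubmonoid.inclusion hle) (⟨k • v, S.nsmul_mem hv k⟩ : S)
        + (⟨-(k • v), hneg⟩ : S') = 0 := by
      apply Subtype.ext
      show (k • v) + (-(k • v)) = 0
      abel
    rw [h0]
    exact AddMonoidAlgebra.one_def.symm
  · -- surj
    intro z
    have hdec : ∀ s' : S', ∃ s ∈ S, ∃ m : ℤ, (s' : Fin n → ℤ) = s + m • v := by
      intro s'
      have h : (s' : Fin n → ℤ) ∈ (S' : Set _) := s'.2
      rw [hS'] at h
      exact h
    choose sfun hsfun mfun hmfun using hdec
    set T := z.coeff.support with hT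
    set k : ℕ := T.sup fun s' => (mfun s').natAbs with hk
    have hmem : ∀ s' ∈ T, (s' : Fin n → ℤ) + k • v ∈ S := by
      intro s' hs'
      have hk' : ((mfun s').natAbs : ℤ) ≤ (k : ℤ) :=
        Int.ofNat_le.mpr (Finset.le_sup (f := fun s' => (mfun s').natAbs) hs')
      have hge : 0 ≤ mfun s' + (k : ℤ) := by omega
      have h1 : ((mfun s' + k).toNat) • v = (mfun s' + (k : ℤ)) • v := by
        rw [← natCast_zsmul, Int.toNat_of_nonneg hge]
      have heq : (s' : Fin n → ℤ) + k • v = sfun s' + ((mfun s' + k).toNat) • v := by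
        rw [hmfun s', h1, add_zsmul, ← add_assoc]
        congr 1
      rw [heq]
      exact S.add_mem (hsfun s') (S.nsmul_mem hv _)
    set w : S' := ⟨k • v, hle (S.nsmul_mem hv k)⟩ with hw
    set a : AddMonoidAlgebra R S :=
      ∑ s' ∈ T.attach, AddMonoidAlgebra.single
        (⟨(s'.1 : Fin n → ℤ) + k • v, hmem s'.1 s'.2⟩ : S) (z.coeff s'.1) with ha
    refine ⟨⟨a, ⟨x ^ k, k, rfl⟩⟩, ?_⟩
    show z * algebraMap (AddMonoidAlgebra R S) (AddMonoidAlgebra R S') (x ^ k)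
      = algebraMap (AddMonoidAlgebra R S) (AddMonoidAlgebra R S') a
    rw [hxpow, halg, AddMonoidAlgebra.mapDomain_single]
    have hincl : (AddSubmonoid.inclusion hle) (⟨k • v, S.nsmul_mem hv k⟩ : S) = w :=
      Subtype.ext rfl
    rw [hincl]
    have hlhs : z * AddMonoidAlgebra.single w (1 : R)
        = ∑ s' ∈ T, AddMonoidAlgebra.single (s' + w) (z.coeff s') := by
      conv_lhs => rw [← AddMonoidAlgebra.sum_coeff_single z]
      rw [Finsupp.sum, Finset.sum_mul]
      exact Finset.sum_congr rfl fun s' _ => by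
        rw [AddMonoidAlgebra.single_mul_single, mul_one]
    rw [hlhs, ← Finset.sum_attach T fun s' => AddMonoidAlgebra.single (s' + w) (z.coeff s')]
    rw [ha, map_sum]
    refine Finset.sum_congr rfl fun s' _ => ?_
    rw [halg, AddMonoidAlgebra.mapDomain_single]
    exact congrArg (fun t => AddMonoidAlgebra.single t (z.coeff s'.1)) (Subtype.ext rfl)
  · -- exists_of_eq
    intro a b h
    refine ⟨1, ?_⟩
    have hinj : Function.Injective (AddSubmonoid.inclusion hle) := by
      intro p q hpq
      have : ((AddSubmonoid.inclusion hle) p : Fin n → ℤ)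
          = ((AddSubmonoid.inclusion hle) q : Fin n → ℤ) := congrArg Subtype.val hpq
      exact Subtype.ext this
    have h2 : a = b := AddMonoidAlgebra.mapDomain_injective hinj h
    rw [h2]

/-- Let `R` be a commutative ring, `S ≤ S'` additive submonoids of `ℤⁿ` with
`v ∈ S` and `S' = {s + m • v | s ∈ S, m ∈ ℤ}`. With the `AddMonoidAlgebra R S`-algebra
structure on `AddMonoidAlgebra R S'` given by `Finsupp.mapDomain` along the inclusion,
`AddMonoidAlgebra R S'` is the localization of `AddMonoidAlgebra R S` away from
`Finsupp.single v 1`. -/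
theorem stmt2 {n : ℕ} (R : Type*) [CommRing R]
    (S S' : AddSubmonoid (Fin n → ℤ)) (v : Fin n → ℤ) (hv : v ∈ S)
    (hS' : (S' : Set (Fin n → ℤ)) = {x | ∃ s ∈ S, ∃ m : ℤ, x = s + m • v})
    (hle : S ≤ S') :
    letI : Algebra (AddMonoidAlgebra R S) (AddMonoidAlgebra R S') :=
      (AddMonoidAlgebra.mapDomainRingHom R (AddSubmonoid.inclusion hle)).toAlgebra
    IsLocalization.Away
      (AddMonoidAlgebra.single (⟨v, hv⟩ : S) (1 : R) : AddMonoidAlgebra R S)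
      (AddMonoidAlgebra R S') := by
  exact aux2 R S S' v hv hS' hle
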